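/- Let X be a metric space and L ⊆ (0,∞) a level set. The canonical L-tower T_X^L = {(C_λ(x), λ) : x ∈ X, λ ∈ L}, ordered by (C_λ(x),λ) ≤ (C_l(y),l) iff λ ≤ l and C_λ(x) ⊆ C_l(y), is a tower: it is ↑-directed and all its order intervals are finite and linearly ordered. -/

import Mathlib

/-- The `s`-connected component of `x`. -/
def chainComp {X : Type*} [MetricSpace X] (s : ℝ) (x : X) : Set X :=
  {y | Relation.ReflTransGen (fun a b => dist a b ≤ s) x y}

/-- The canonical `L`-tower of a metric space `X`: pairs `(C_λ(x), λ)` with `λ ∈ L`. -/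
def CanonTower (X : Type*) [MetricSpace X] (L : Set ℝ) : Type _ :=
  {p : Set X × ℝ // p.2 ∈ L ∧ ∃ x : X, p.1 = chainComp p.2 x}

/-- The partial order on the canonical `L`-tower:
`(C_λ(x), λ) ≤ (C_l(y), l)` iff `λ ≤ l` and `C_λ(x) ⊆ C_l(y)`. -/
def canonLe {X : Type*} [MetricSpace X] {L : Set ℝ}
    (a b : CanonTower X L) : Prop :=
  a.1.2 ≤ b.1.2 ∧ a.1.1 ⊆ b.1.1

lemma mem_chainComp_self {X : Type*} [MetricSpace X] (s : ℝ) (x : X) :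
    x ∈ chainComp s x := Relation.ReflTransGen.refl

lemma chainComp_symm {X : Type*} [MetricSpace X] {s : ℝ} {x y : X}
    (h : y ∈ chainComp s x) : x ∈ chainComp s y :=
  by
  haveI : Std.Symm (fun a b : X => dist a b ≤ s) := ⟨fun a b hd => by rwa [dist_comm]⟩
  exact Std.Symm.symm (r := Relation.ReflTransGen (fun a b : X => dist a b ≤ s)) _ _ h

lemma chainComp_eq_of_mem {X : Type*} [MetricSpace X] {s : ℝ} {x y : X}
    (h : y ∈ chainComp s x) : chainComp s x = chainComp s y := by
  ext z
  exact ⟨fun hz => Relation.ReflTransGen.trans (chainComp_symm h) hz,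
    fun hz => Relation.ReflTransGen.trans h hz⟩

lemma chainComp_mono {X : Type*} [MetricSpace X] {s t : ℝ} (hst : s ≤ t) (x : X) :
    chainComp s x ⊆ chainComp t x := fun _ hz =>
  Relation.ReflTransGen.mono (r := fun a b : X => dist a b ≤ s) (fun _ _ h => le_trans h hst) _ _ hz

/-- For a metric space `X` and a level set `L ⊆ (0,∞)`, the canonical `L`-tower is a
tower: it is ↑-directed and all its order intervals are finite and linearly ordered. -/
theorem canonTower_is_tower {X : Type*} [MetricSpace X] (L : Set ℝ)
    (hLpos : ∀ l ∈ L, 0 < l)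
    (hLsup : ∀ r : ℝ, ∃ l ∈ L, r ≤ l)
    (hLicc : ∀ a ∈ L, ∀ b ∈ L, (L ∩ Set.Icc a b).Finite)
    (hLinf : (∃ a ∈ L, (L ∩ Set.Iic a).Infinite) → ∀ ε : ℝ, 0 < ε → ∃ l ∈ L, l ≤ ε) :
    (∀ a b : CanonTower X L, ∃ c : CanonTower X L, canonLe a c ∧ canonLe b c) ∧
    (∀ a b : CanonTower X L, {c : CanonTower X L | canonLe a c ∧ canonLe c b}.Finite) ∧
    (∀ a b : CanonTower X L,
      ∀ u ∈ {c : CanonTower X L | canonLe a c ∧ canonLe c b},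
      ∀ v ∈ {c : CanonTower X L | canonLe a c ∧ canonLe c b},
        canonLe u v ∨ canonLe v u) := by
  refine ⟨?_, ?_, ?_⟩
  · -- directedness
    intro a b
    obtain ⟨haL, x, hx⟩ := a.2
    obtain ⟨hbL, y, hy⟩ := b.2
    obtain ⟨m, hmL, hm⟩ := hLsup (max (max a.1.2 b.1.2) (dist x y))
    have has : a.1.2 ≤ m := le_trans (le_trans (le_max_left _ _) (le_max_left _ _)) hm
    have hbs : b.1.2 ≤ m := le_trans (le_trans (le_max_right _ _) (le_max_left _ _)) hm
    refine ⟨⟨⟨chainComp m x, m⟩, hmL, x, rfl⟩, ⟨has, ?_⟩, ⟨hbs, ?_⟩⟩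
    · rw [hx]; exact chainComp_mono has x
    · have hym : y ∈ chainComp m x :=
        Relation.ReflTransGen.single (le_trans (le_max_right _ _) hm)
      rw [hy]
      show chainComp b.1.2 y ⊆ chainComp m x
      rw [chainComp_eq_of_mem hym]
      exact chainComp_mono hbs y
  · -- finite intervals
    intro a b
    obtain ⟨haL, xa, hxa⟩ := a.2
    have hxa_mem : xa ∈ a.1.1 := hxa ▸ mem_chainComp_self _ _
    have hinj : Set.InjOn (fun c : CanonTower X L => c.1.2)
        {c : CanonTower X L | canonLe a c ∧ canonLe c b} := by
      rintro u ⟨⟨_, hau⟩, _⟩ v ⟨⟨_, hav⟩, _⟩ huv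
      obtain ⟨_, xu, hxu⟩ := u.2
      obtain ⟨_, xv, hxv⟩ := v.2
      have h1 : u.1.1 = chainComp u.1.2 xa := by
        rw [hxu]; exact chainComp_eq_of_mem (hxu ▸ hau hxa_mem)
      have h2 : v.1.1 = chainComp v.1.2 xa := by
        rw [hxv]; exact chainComp_eq_of_mem (hxv ▸ hav hxa_mem)
      have huv' : u.1.2 = v.1.2 := huv
      apply Subtype.ext
      have : u.1.1 = v.1.1 := by rw [h1, h2, huv']
      exact Prod.ext this huv'
    have hsub : (fun c : CanonTower X L => c.1.2) ''
        {c : CanonTower X L | canonLe a c ∧ canonLe c b} ⊆ L ∩ Set.Icc a.1.2 b.1.2 := by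
      rintro r ⟨c, ⟨⟨h1, _⟩, ⟨h2, _⟩⟩, rfl⟩
      exact ⟨c.2.1, h1, h2⟩
    exact Set.Finite.of_finite_image ((hLicc _ haL _ b.2.1).subset hsub) hinj
  · -- linearity
    intro a b u ⟨⟨_, hau⟩, _⟩ v ⟨⟨_, hav⟩, _⟩
    obtain ⟨haL, xa, hxa⟩ := a.2
    have hxa_mem : xa ∈ a.1.1 := hxa ▸ mem_chainComp_self _ _
    obtain ⟨_, xu, hxu⟩ := u.2
    obtain ⟨_, xv, hxv⟩ := v.2
    have h1 : u.1.1 = chainComp u.1.2 xa := by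
      rw [hxu]; exact chainComp_eq_of_mem (hxu ▸ hau hxa_mem)
    have h2 : v.1.1 = chainComp v.1.2 xa := by
      rw [hxv]; exact chainComp_eq_of_mem (hxv ▸ hav hxa_mem)
    rcases le_total u.1.2 v.1.2 with h | h
    · exact Or.inl ⟨h, by rw [h1, h2]; exact chainComp_mono h xa⟩
    · exact Or.inr ⟨h, by rw [h1, h2]; exact chainComp_mono h xa⟩
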